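/- Let p be an odd prime and c ∈ F_p with c ≠ ±2 and c^2 - 4 a nonzero square in F_p. Then the trinomial coefficient T(p-2,0), computed in F_p, equals c/(c^2-4). -/

import Mathlib

open Polynomial Finset

lemma toLaurent_coeff {R : Type*} [CommSemiring R] (q : Polynomial R) (m : ℕ) :
    ((Polynomial.toLaurent q : LaurentPolynomial R).coeff : ℤ →₀ R) (m : ℤ) = q.coeff m := by
  rw [LaurentPolynomial.coeff_toLaurent]
  exact Finsupp.mapDomain_apply Nat.cast_injective q.toFinsupp.coeff m

lemma mul_T_coeff {R : Type*} [CommSemiring R] (f : LaurentPolynomial R) (m k : ℤ) :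
    ((f * LaurentPolynomial.T m : LaurentPolynomial R).coeff : ℤ →₀ R) k = (f.coeff : ℤ →₀ R) (k - m) := by
  simpa [sub_eq_add_neg] using AddMonoidAlgebra.coeff_mul_single_apply f 1 m k

/-- The trinomial coefficient: coefficient of `x^k` in `(x + c + x⁻¹)^n` over `R`. -/
noncomputable def triCoeff (R : Type*) [CommRing R] (c : R) (n : ℕ) (k : ℤ) : R :=
  (((LaurentPolynomial.T 1 + LaurentPolynomial.C c + LaurentPolynomial.T (-1)) ^ n :
      LaurentPolynomial R).coeff : ℤ →₀ R) k

lemma triCoeff_eq {R : Type*} [CommRing R] (c : R) (n : ℕ) :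
    triCoeff R c n 0 = ((X ^ 2 + Polynomial.C c * X + 1 : R[X]) ^ n).coeff n := by
  have key : (LaurentPolynomial.T 1 + LaurentPolynomial.C c + LaurentPolynomial.T (-1) :
      LaurentPolynomial R)
      = Polynomial.toLaurent (X ^ 2 + Polynomial.C c * X + 1) * LaurentPolynomial.T (-1) := by
    rw [map_add, map_add, map_mul, map_pow, Polynomial.toLaurent_X, Polynomial.toLaurent_C,
      map_one, add_mul, add_mul, one_mul, mul_assoc, LaurentPolynomial.T_pow,
      ← LaurentPolynomial.T_add, ← LaurentPolynomial.T_add]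
    norm_num
  unfold triCoeff
  rw [key, mul_pow, ← map_pow, LaurentPolynomial.T_pow, mul_T_coeff]
  have : (0 - (n : ℤ) * (-1)) = (n : ℤ) := by ring
  rw [this, toLaurent_coeff]

lemma coeff_eq_neg_sum (p : ℕ) [Fact p.Prime] (hp3 : 3 ≤ p) (g : Polynomial (ZMod p))
    (hdeg : g.natDegree ≤ 2 * (p - 2)) :
    g.coeff (p - 2) = - ∑ x : (ZMod p)ˣ, g.eval (x : ZMod p) * (x : ZMod p) := by
  classical
  set N := 2 * (p - 2) + 1 with hN
  have hcard : Fintype.card (ZMod p) = p := ZMod.card p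
  have hdegN : g.natDegree < N := by omega
  have hsum : ∀ x : (ZMod p)ˣ, g.eval (x : ZMod p) * (x : ZMod p)
      = ∑ i ∈ range N, g.coeff i * (x : ZMod p) ^ (i + 1) := by
    intro x
    rw [eval_eq_sum_range' hdegN, Finset.sum_mul]
    exact Finset.sum_congr rfl fun i _ => by rw [pow_succ, mul_assoc]
  have hpow : ∀ i : ℕ, (∑ x : (ZMod p)ˣ, (x : ZMod p) ^ i)
      = if p - 1 ∣ i then (-1 : ZMod p) else 0 := by
    intro i
    have h := FiniteField.sum_pow_units (ZMod p) i
    rw [hcard] at h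
    rw [← h]
  have key : ∑ x : (ZMod p)ˣ, g.eval (x : ZMod p) * (x : ZMod p)
      = ∑ i ∈ range N, g.coeff i * (if p - 1 ∣ i + 1 then (-1 : ZMod p) else 0) := by
    simp_rw [hsum, ← hpow]
    rw [Finset.sum_comm]
    exact Finset.sum_congr rfl fun i _ => (Finset.mul_sum _ _ _).symm
  rw [key, Finset.sum_eq_single (p - 2)]
  · have h1 : p - 2 + 1 = p - 1 := by omega
    rw [h1, if_pos dvd_rfl]
    ring
  · intro i hi hne
    rcases em (p - 1 ∣ i + 1) with h | h
    · exfalso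
      rw [Finset.mem_range] at hi
      obtain ⟨k, hk⟩ := h
      have hk3 : k < 3 := by
        by_contra hk3
        push_neg at hk3
        have := Nat.mul_le_mul_left (p - 1) hk3
        omega
      interval_cases k <;> omega
    · rw [if_neg h, mul_zero]
  · intro h
    exact absurd (Finset.mem_range.mpr (by omega)) h

theorem tri_p_sub_two_zero_sq (p : ℕ) [Fact p.Prime] (hp : p ≠ 2) (c : ZMod p)
    (hc2 : c ≠ 2) (hc2' : c ≠ -2) (hsq : IsSquare (c ^ 2 - 4)) (hne : c ^ 2 - 4 ≠ 0) :
    triCoeff (ZMod p) c (p - 2) 0 = c / (c ^ 2 - 4) := by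
  classical
  have hp3 : 3 ≤ p := by
    have := (Fact.out : p.Prime).two_le
    rcases Nat.lt_or_ge p 3 with h | h
    · interval_cases p <;> simp_all
    · exact h
  have h2 : (2 : ZMod p) ≠ 0 := by
    intro h
    have h' : ((2 : ℕ) : ZMod p) = 0 := by exact_mod_cast h
    have := (ZMod.natCast_eq_zero_iff 2 p).mp h'
    have := (Nat.prime_dvd_prime_iff_eq Fact.out Nat.prime_two).mp this
    omega
  obtain ⟨d, hd⟩ := hsq
  have hd0 : d ≠ 0 := fun h => hne (by rw [hd, h, mul_zero])
  set r : ZMod p := (-c + d) / 2 with hr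
  set s : ZMod p := (-c - d) / 2 with hs
  have hrs_add : r + s = -c := by rw [hr, hs]; field_simp; ring
  have hrs_sub : r - s = d := by rw [hr, hs]; field_simp; ring
  have hrs_mul : r * s = 1 := by
    rw [hr, hs, div_mul_div_comm, div_eq_one_iff_eq (mul_ne_zero h2 h2)]
    linear_combination hd
  have hrns : r ≠ s := by
    intro h
    exact hd0 (by rw [← hrs_sub, h, sub_self])
  clear_value r s
  have hfactor : ∀ x : ZMod p, x ^ 2 + c * x + 1 = (x - r) * (x - s) := by
    intro x
    linear_combination x * hrs_add - hrs_mul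
  -- inverse lemma
  have hinv : ∀ a : ZMod p, a ^ (p - 2) = a⁻¹ := by
    intro a
    rcases eq_or_ne a 0 with rfl | h
    · rw [zero_pow (by omega), inv_zero]
    · refine eq_inv_of_mul_eq_one_left ?_
      rw [← pow_succ]
      have hh : p - 2 + 1 = p - 1 := by omega
      rw [hh]
      exact ZMod.pow_card_sub_one_eq_one h
  -- pair-split helper
  have pairsplit : ∀ F : ZMod p → ZMod p,
      ∑ x ∈ univ \ ({r, s} : Finset (ZMod p)), F x = (∑ x : ZMod p, F x) - (F r + F s) := by
    intro F
    rw [Finset.sum_sdiff_eq_sub (Finset.subset_univ _), Finset.sum_pair hrns]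
  -- sum of shifted inverses over the whole field
  have hshift : ∀ a : ZMod p, ∑ x : ZMod p, (x - a)⁻¹ = 0 := by
    intro a
    have h1 : ∑ y : ZMod p, y⁻¹ = 0 := by
      have h2' : ∑ y : ZMod p, y ^ (p - 2) = 0 :=
        FiniteField.sum_pow_lt_card_sub_one (ZMod p) (p - 2) (by rw [ZMod.card]; omega)
      rw [← h2']
      exact Finset.sum_congr rfl fun y _ => (hinv y).symm
    rw [← h1]
    exact Fintype.sum_equiv (Equiv.subRight a) _ _ fun x => rfl
  have hsumr : ∑ x ∈ univ \ ({r, s} : Finset (ZMod p)), (x - r)⁻¹ = -(s - r)⁻¹ := by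
    rw [pairsplit, hshift, sub_self, inv_zero]; ring
  have hsums : ∑ x ∈ univ \ ({r, s} : Finset (ZMod p)), (x - s)⁻¹ = -(r - s)⁻¹ := by
    rw [pairsplit, hshift, sub_self, inv_zero]; ring
  -- the main sum
  have hS : ∑ x : ZMod p, (x - r)⁻¹ * (x - s)⁻¹ * x = -c / (c ^ 2 - 4) := by
    have hzero : ∑ x ∈ univ \ ({r, s} : Finset (ZMod p)), (x - r)⁻¹ * (x - s)⁻¹ * x
        = ∑ x : ZMod p, (x - r)⁻¹ * (x - s)⁻¹ * x := by
      rw [pairsplit]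
      simp
    rw [← hzero]
    have hpf : ∀ x ∈ univ \ ({r, s} : Finset (ZMod p)),
        (x - r)⁻¹ * (x - s)⁻¹ * x = (r * (x - r)⁻¹ - s * (x - s)⁻¹) * d⁻¹ := by
      intro x hx
      simp only [Finset.mem_sdiff, Finset.mem_insert, Finset.mem_singleton, not_or] at hx
      have h1 : x - r ≠ 0 := sub_ne_zero.mpr hx.2.1
      have h2' : x - s ≠ 0 := sub_ne_zero.mpr hx.2.2
      rw [← hrs_sub]
      have h3 : r - s ≠ 0 := sub_ne_zero.mpr hrns
      field_simp
      ring
    rw [Finset.sum_congr rfl hpf, ← Finset.sum_mul, Finset.sum_sub_distrib,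
      ← Finset.mul_sum, ← Finset.mul_sum, hsumr, hsums]
    have e1 : -(s - r)⁻¹ = d⁻¹ := by rw [← inv_neg, neg_sub, hrs_sub]
    have e2 : -(r - s)⁻¹ = -d⁻¹ := by rw [hrs_sub]
    rw [e1, e2, hd]
    have e3 : r * d⁻¹ - s * -d⁻¹ = (r + s) * d⁻¹ := by ring
    rw [e3, hrs_add, div_eq_mul_inv, mul_inv]
    ring
  -- assemble
  set g : Polynomial (ZMod p) := (X ^ 2 + Polynomial.C c * X + 1) ^ (p - 2) with hg
  have hdeg : g.natDegree ≤ 2 * (p - 2) := by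
    rw [hg]
    refine le_trans (Polynomial.natDegree_pow_le) ?_
    have hb : (X ^ 2 + Polynomial.C c * X + 1 : Polynomial (ZMod p)).natDegree ≤ 2 := by
      compute_degree
    calc (p - 2) * (X ^ 2 + Polynomial.C c * X + 1 : Polynomial (ZMod p)).natDegree
        ≤ (p - 2) * 2 := Nat.mul_le_mul_left _ hb
      _ = 2 * (p - 2) := Nat.mul_comm _ _
  have heval : ∀ x : ZMod p, g.eval x = (x - r)⁻¹ * (x - s)⁻¹ := by
    intro x
    rw [hg, eval_pow]
    have hb : Polynomial.eval x (X ^ 2 + Polynomial.C c * X + 1 : Polynomial (ZMod p))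
        = (x - r) * (x - s) := by
      simp only [eval_add, eval_mul, eval_pow, eval_X, eval_C, eval_one]
      exact hfactor x
    rw [hb, hinv, mul_inv]
  have hUF : ∑ x : (ZMod p)ˣ, g.eval (x : ZMod p) * (x : ZMod p)
      = ∑ x : ZMod p, g.eval x * x := by
    let φ : (ZMod p)ˣ ↪ ZMod p := ⟨fun x => x, fun _ _ h => Units.ext h⟩
    have himg : univ.map φ = univ \ {0} := by
      ext x
      simp only [mem_map, mem_univ, Function.Embedding.coeFn_mk, true_and, mem_sdiff,
        mem_singleton, φ]
      exact isUnit_iff_ne_zero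
    have h1 : ∑ x ∈ univ.map φ, g.eval x * x
        = ∑ x : (ZMod p)ˣ, g.eval (x : ZMod p) * (x : ZMod p) := by
      rw [Finset.sum_map]
      rfl
    rw [← h1, himg, Finset.sum_sdiff_eq_sub (Finset.subset_univ _)]
    simp
  rw [triCoeff_eq, ← hg, coeff_eq_neg_sum p hp3 g hdeg, hUF]
  rw [show (∑ x : ZMod p, g.eval x * x) = ∑ x : ZMod p, (x - r)⁻¹ * (x - s)⁻¹ * x from
    Finset.sum_congr rfl fun x _ => by rw [heval x], hS]
  rw [neg_div, neg_neg]
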